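/- The formal power series F(x) = \sum_{k=0}^{∞} C_k^{(d)} x^{k(d-1)+1} over ℚ satisfies the functional equation F(x) = F(x)^d + x, where d ≥ 2 and C_k^{(d)} = (1/(k(d-1)+1)) * binomial(dk,k) are the Fuss–Catalan numbers. -/

import Mathlib

open PowerSeries

/-- The Fuss–Catalan number `C_k^{(d)} = (1/(k(d-1)+1)) * binomial (d*k) k`. -/
def fussCatalan (d k : ℕ) : ℕ := (d * k).choose k / (k * (d - 1) + 1)

/-- The power series `F = ∑_{k≥0} C_k^{(d)} X^{k(d-1)+1}` over `ℚ`. -/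
noncomputable def fussCatalanSeries (d : ℕ) : PowerSeries ℚ :=
  PowerSeries.mk fun m =>
    if m ≠ 0 ∧ (d - 1) ∣ (m - 1) then (fussCatalan d ((m - 1) / (d - 1)) : ℚ) else 0

namespace FussCatalanAux

/-- Raney numbers `N(j,K) = (j/(dK+j)) * C(dK+j, K)` (with `N(0,K) = δ_{K,0}`). -/
noncomputable def Nf (d j K : ℕ) : ℚ :=
  if j = 0 then (if K = 0 then 1 else 0)
  else (j : ℚ) / (d * K + j) * ((d * K + j).choose K)

lemma Nf_pos (d j K : ℕ) (hK : K ≠ 0) :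
    Nf d j K = (j : ℚ) / (d * K + j) * ((d * K + j).choose K) := by
  unfold Nf
  rcases eq_or_ne j 0 with h | h
  · subst h; simp [hK]
  · rw [if_neg h]

lemma Nf_posj (d j K : ℕ) (hj : j ≠ 0) :
    Nf d j K = (j : ℚ) / (d * K + j) * ((d * K + j).choose K) := by
  unfold Nf; rw [if_neg hj]

lemma Nf_zero_right (d j : ℕ) : Nf d j 0 = 1 := by
  unfold Nf
  rcases eq_or_ne j 0 with h | h
  · simp [h]
  · have hj : (j : ℚ) ≠ 0 := Nat.cast_ne_zero.mpr h
    rw [if_neg h]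
    simp [hj]

/-- The key recurrence for Raney numbers. -/
lemma Nf_rec (d : ℕ) (hd : 2 ≤ d) (j K : ℕ) :
    Nf d (j + 1) K = Nf d j K + (if K = 0 then 0 else Nf d (j + d) (K - 1)) := by
  rcases K with _ | K'
  · simp [Nf_zero_right]
  · rw [if_neg (Nat.succ_ne_zero K')]
    have e1 : d * K' + (j + d) = d * (K' + 1) + j := by ring
    have e2 : d * (K' + 1) + (j + 1) = (d * (K' + 1) + j) + 1 := by ring
    rw [Nf_pos _ _ _ (Nat.succ_ne_zero K'), Nf_pos _ _ _ (Nat.succ_ne_zero K'),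
      Nf_posj _ _ _ (by omega), Nat.succ_sub_one, e1, e2, Nat.choose_succ_succ]
    simp only [Nat.succ_eq_add_one]
    have hK'm : K' ≤ d * (K' + 1) + j := by
      have h1 : K' + 1 ≤ d * (K' + 1) := Nat.le_mul_of_pos_left _ (by omega)
      omega
    have fact2 : (d * (K' + 1) + j).choose (K' + 1) * (K' + 1)
        = (d * (K' + 1) + j).choose K' * (d * (K' + 1) + j - K') :=
      Nat.choose_succ_right_eq _ K'
    have fact2q : ((d * (K' + 1) + j).choose (K' + 1) : ℚ) * ((K' : ℚ) + 1)
        = ((d * (K' + 1) + j).choose K' : ℚ) * (((d : ℚ) * ((K' : ℚ) + 1) + (j : ℚ)) - (K' : ℚ)) := by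
      have h := congrArg (fun x : ℕ => (x : ℚ)) fact2
      push_cast [Nat.cast_sub hK'm] at h
      linarith [h]
    have hD : (0 : ℚ) < (d : ℚ) * ((K' : ℚ) + 1) + (j : ℚ) := by
      have h2 : (2 : ℚ) ≤ (d : ℚ) := by exact_mod_cast hd
      have h3 : (0 : ℚ) ≤ (K' : ℚ) := Nat.cast_nonneg _
      have h4 : (0 : ℚ) ≤ (j : ℚ) := Nat.cast_nonneg _
      nlinarith
    push_cast
    have q1 : ((d : ℚ) * (K' : ℚ) + ((j : ℚ) + (d : ℚ))) = (d : ℚ) * ((K' : ℚ) + 1) + (j : ℚ) := by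
      ring
    have q2 : ((d : ℚ) * ((K' : ℚ) + 1) + ((j : ℚ) + 1)) = ((d : ℚ) * ((K' : ℚ) + 1) + (j : ℚ)) + 1 := by
      ring
    rw [q1, q2, div_mul_eq_mul_div, div_mul_eq_mul_div, div_mul_eq_mul_div,
      div_add_div _ _ hD.ne' hD.ne', div_eq_div_iff (by linarith) (mul_pos hD hD).ne']
    linear_combination ((d : ℚ) * ((d : ℚ) * ((K' : ℚ) + 1) + (j : ℚ))) * fact2q

lemma key_choose (d k : ℕ) (hd : 2 ≤ d) :
    (d * (k + 1)).choose (k + 1) * (k + 1)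
      = (d * (k + 1)).choose k * ((k + 1) * (d - 1) + 1) := by
  have h := Nat.choose_succ_right_eq (d * (k + 1)) k
  have e : d * (k + 1) - k = (k + 1) * (d - 1) + 1 := by
    obtain ⟨e, rfl⟩ : ∃ e, d = e + 2 := ⟨d - 2, by omega⟩
    have : (e + 2) * (k + 1) = (k + 1) * (e + 2 - 1) + 1 + k := by
      have : e + 2 - 1 = e + 1 := rfl
      rw [this]; ring
    omega
  rw [e] at h
  exact h

lemma fussCatalan_dvd (d k : ℕ) (hd : 2 ≤ d) :
    ((k + 1) * (d - 1) + 1) ∣ (d * (k + 1)).choose (k + 1) := by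
  have key := key_choose d k hd
  have hco : Nat.Coprime ((k + 1) * (d - 1) + 1) (k + 1) := by
    have h1 : Nat.Coprime (k + 1) (1 + (d - 1) * (k + 1)) :=
      (Nat.coprime_add_mul_right_right (k + 1) 1 (d - 1)).mpr (Nat.coprime_one_right _)
    have e : 1 + (d - 1) * (k + 1) = (k + 1) * (d - 1) + 1 := by ring
    rw [e] at h1
    exact h1.symm
  have h2 : ((k + 1) * (d - 1) + 1) ∣ (d * (k + 1)).choose (k + 1) * (k + 1) :=
    ⟨(d * (k + 1)).choose k, by rw [key, mul_comm]⟩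
  exact hco.dvd_of_dvd_mul_right h2

/-- Cast of the Fuss–Catalan number at `k+1` equals `Nf d d k`. -/
lemma fussCatalan_cast (d k : ℕ) (hd : 2 ≤ d) :
    (fussCatalan d (k + 1) : ℚ) = Nf d d k := by
  have hdvd := fussCatalan_dvd d k hd
  have hq0 : (((k + 1) * (d - 1) + 1 : ℕ) : ℚ) ≠ 0 := by
    exact_mod_cast Nat.succ_ne_zero ((k + 1) * (d - 1))
  rw [fussCatalan, Nat.cast_div hdvd hq0, Nf_posj _ _ _ (by omega)]
  have e : d * k + d = d * (k + 1) := by ring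
  rw [e]
  have key := key_choose d k hd
  have keyq := congrArg (fun x : ℕ => (x : ℚ)) key
  have hd1 : 1 ≤ d := by omega
  push_cast [Nat.cast_sub hd1] at keyq
  have hQ : (0 : ℚ) < (((k + 1) * (d - 1) + 1 : ℕ) : ℚ) := by
    exact_mod_cast Nat.succ_pos ((k + 1) * (d - 1))
  have hd0 : (0 : ℚ) < (d : ℚ) := by exact_mod_cast (by omega : 0 < d)
  have hDk : (0 : ℚ) < (d : ℚ) * (k : ℚ) + (d : ℚ) := by
    have := mul_nonneg hd0.le (Nat.cast_nonneg (α := ℚ) k)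
    linarith
  rw [div_mul_eq_mul_div, div_eq_div_iff hQ.ne' hDk.ne']
  push_cast [Nat.cast_sub hd1]
  linear_combination (d : ℚ) * keyq

/-- The coefficient series `A = ∑ C_k x^k`. -/
noncomputable def A (d : ℕ) : PowerSeries ℚ :=
  PowerSeries.mk fun k => (fussCatalan d k : ℚ)

lemma coeff_A_zero (d : ℕ) : coeff 0 (A d) = 1 := by
  simp [A, fussCatalan]

lemma coeff_A_succ (d : ℕ) (hd : 2 ≤ d) (k : ℕ) :
    coeff (k + 1) (A d) = Nf d d k := by
  simp only [A, coeff_mk]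
  exact fussCatalan_cast d k hd

/-- Main combinatorial lemma: coefficients of powers of `A` are Raney numbers. -/
lemma coeff_A_pow (d : ℕ) (hd : 2 ≤ d) :
    ∀ K j, coeff K ((A d) ^ j) = Nf d j K := by
  intro K
  induction K using Nat.strong_induction_on with
  | _ K ih =>
    intro j
    induction j with
    | zero =>
      simp only [pow_zero, coeff_one, Nf]
      simp
    | succ j ihj =>
      rw [pow_succ, coeff_mul, Finset.Nat.sum_antidiagonal_eq_sum_range_succ_mk,
        Finset.sum_range_succ]
      dsimp only
      have hlast : coeff K ((A d) ^ j) * coeff (K - K) (A d) = Nf d j K := by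
        rw [ihj, Nat.sub_self, coeff_A_zero, mul_one]
      have hsum2 : ∑ i ∈ Finset.range K, coeff i ((A d) ^ j) * coeff (K - i) (A d)
          = if K = 0 then 0 else Nf d (j + d) (K - 1) := by
        rcases Nat.eq_zero_or_pos K with hK | hK
        · subst hK; simp
        · rw [if_neg hK.ne']
          have hsum : ∀ i ∈ Finset.range K,
              coeff i ((A d) ^ j) * coeff (K - i) (A d)
                = Nf d j i * Nf d d (K - 1 - i) := by
            intro i hi
            have hiK : i < K := Finset.mem_range.mp hi
            rw [ih i hiK j]
            have : K - i = (K - 1 - i) + 1 := by omega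
            conv_lhs => rw [this]
            rw [coeff_A_succ d hd]
          rw [Finset.sum_congr rfl hsum]
          have hKm : K - 1 < K := by omega
          have h1 : coeff (K - 1) ((A d) ^ (j + d)) = Nf d (j + d) (K - 1) :=
            ih (K - 1) hKm (j + d)
          rw [← h1, pow_add, coeff_mul, Finset.Nat.sum_antidiagonal_eq_sum_range_succ_mk]
          have hr : K - 1 + 1 = K := by omega
          simp only [Nat.succ_eq_add_one]
          rw [hr]
          refine Finset.sum_congr rfl fun i hi => ?_
          have hiK : i < K := Finset.mem_range.mp hi
          rw [ih i hiK j, ih (K - 1 - i) (by omega) d]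
      rw [hlast, hsum2, Nf_rec d hd j K, add_comm]

/-- The functional equation for `A`: `A = 1 + X * A^d`. -/
lemma A_eq (d : ℕ) (hd : 2 ≤ d) : A d = 1 + X * (A d) ^ d := by
  ext K
  rcases K with _ | K
  · rw [map_add, coeff_A_zero]
    simp
  · rw [map_add, coeff_succ_X_mul, coeff_A_succ d hd, coeff_A_pow d hd K d]
    simp

/-- Expansion `A(X) ↦ A(X^e)`. -/
noncomputable def expandPS (e : ℕ) (A : PowerSeries ℚ) : PowerSeries ℚ :=
  PowerSeries.mk fun n => if e ∣ n then coeff (n / e) A else 0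

lemma coeff_expandPS (e n : ℕ) (A : PowerSeries ℚ) :
    coeff n (expandPS e A) = if e ∣ n then coeff (n / e) A else 0 :=
  coeff_mk _ _

lemma expandPS_one (e : ℕ) (he : e ≠ 0) : expandPS e 1 = 1 := by
  ext n
  simp only [coeff_expandPS, coeff_one]
  rcases eq_or_ne n 0 with h | h
  · subst h
    simp
  · rw [if_neg h]
    split_ifs with h1 h2
    · exfalso
      obtain ⟨c, rfl⟩ := h1
      rw [Nat.mul_div_cancel_left c (Nat.pos_of_ne_zero he)] at h2
      exact h (by rw [h2, mul_zero])
    · rfl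
    · rfl

lemma expandPS_X (e : ℕ) (he : e ≠ 0) : expandPS e X = X ^ e := by
  ext n
  rw [coeff_expandPS, coeff_X_pow]
  by_cases h : e ∣ n
  · rw [if_pos h]
    obtain ⟨c, rfl⟩ := h
    rw [Nat.mul_div_cancel_left c (Nat.pos_of_ne_zero he), coeff_X]
    rcases eq_or_ne c 1 with rfl | hc
    · simp
    · have hne : e * c ≠ e := fun hh =>
        hc (Nat.eq_of_mul_eq_mul_left (Nat.pos_of_ne_zero he) (by rw [hh, mul_one]))
      rw [if_neg hc, if_neg hne]
  · have hne : n ≠ e := fun hne => h (dvd_of_eq hne.symm)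
    rw [if_neg h, if_neg hne]

lemma expandPS_mul (e : ℕ) (he : e ≠ 0) (A B : PowerSeries ℚ) :
    expandPS e (A * B) = expandPS e A * expandPS e B := by
  ext n
  rw [coeff_mul]
  simp only [coeff_expandPS]
  by_cases h : e ∣ n
  · obtain ⟨m, rfl⟩ := h
    rw [if_pos (dvd_mul_right e m), Nat.mul_div_cancel_left m (Nat.pos_of_ne_zero he),
      coeff_mul]
    symm
    set emb : ℕ × ℕ ↪ ℕ × ℕ :=
      ⟨fun p => (e * p.1, e * p.2), by
        intro p q hpq
        simp only [Prod.mk.injEq] at hpq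
        have h1 := Nat.eq_of_mul_eq_mul_left (Nat.pos_of_ne_zero he) hpq.1
        have h2 := Nat.eq_of_mul_eq_mul_left (Nat.pos_of_ne_zero he) hpq.2
        exact Prod.ext h1 h2⟩ with hemb
    have hsub : (Finset.HasAntidiagonal.antidiagonal m).map emb ⊆ Finset.HasAntidiagonal.antidiagonal (e * m) := by
      intro p hp
      rw [Finset.mem_map] at hp
      obtain ⟨q, hq, rfl⟩ := hp
      rw [Finset.HasAntidiagonal.mem_antidiagonal] at hq ⊢
      simp only [hemb, Function.Embedding.coeFn_mk]
      show e * q.1 + e * q.2 = e * m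
      rw [← Nat.mul_add, hq]
    rw [← Finset.sum_subset hsub]
    · rw [Finset.sum_map]
      refine Finset.sum_congr rfl fun q hq => ?_
      simp only [hemb, Function.Embedding.coeFn_mk]
      show (if e ∣ e * q.1 then coeff (e * q.1 / e) A else 0) * (if e ∣ e * q.2 then coeff (e * q.2 / e) B else 0) = _
      rw [if_pos (dvd_mul_right e q.1), if_pos (dvd_mul_right e q.2),
        Nat.mul_div_cancel_left _ (Nat.pos_of_ne_zero he),
        Nat.mul_div_cancel_left _ (Nat.pos_of_ne_zero he)]
    · intro p hp hpn
      by_cases h1 : e ∣ p.1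
      · by_cases h2 : e ∣ p.2
        · exfalso
          apply hpn
          rw [Finset.mem_map]
          obtain ⟨a, ha⟩ := h1
          obtain ⟨b, hb⟩ := h2
          refine ⟨(a, b), ?_, ?_⟩
          · rw [Finset.HasAntidiagonal.mem_antidiagonal]
            have hpm := Finset.HasAntidiagonal.mem_antidiagonal.mp hp
            have : e * (a + b) = e * m := by rw [Nat.mul_add, ← ha, ← hb, hpm]
            exact Nat.eq_of_mul_eq_mul_left (Nat.pos_of_ne_zero he) this
          · simp only [hemb, Function.Embedding.coeFn_mk]
            show (e * a, e * b) = p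
            rw [← ha, ← hb]
        · rw [if_neg h2, mul_zero]
      · rw [if_neg h1, zero_mul]
  · rw [if_neg h]
    symm
    apply Finset.sum_eq_zero
    intro p hp
    by_cases h1 : e ∣ p.1
    · by_cases h2 : e ∣ p.2
      · exfalso
        apply h
        have := Finset.HasAntidiagonal.mem_antidiagonal.mp hp
        rw [← this]
        exact Nat.dvd_add h1 h2
      · rw [if_neg h2, mul_zero]
    · rw [if_neg h1, zero_mul]

lemma expandPS_add (e : ℕ) (A B : PowerSeries ℚ) :
    expandPS e (A + B) = expandPS e A + expandPS e B := by
  ext n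
  rw [map_add, coeff_expandPS, coeff_expandPS, coeff_expandPS]
  split_ifs with h
  · rw [map_add]
  · rw [add_zero]

lemma expandPS_pow (e : ℕ) (he : e ≠ 0) (A : PowerSeries ℚ) (n : ℕ) :
    expandPS e (A ^ n) = (expandPS e A) ^ n := by
  induction n with
  | zero => simpa using expandPS_one e he
  | succ n ihn => rw [pow_succ, expandPS_mul e he, ihn, pow_succ]

end FussCatalanAux

open FussCatalanAux in
/-- The series `F = ∑_{k≥0} C_k^{(d)} X^{k(d-1)+1}` satisfies `F = F^d + X`. -/
theorem fussCatalanSeries_functional_equation (d : ℕ) (hd : 2 ≤ d) :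
    fussCatalanSeries d = (fussCatalanSeries d) ^ d + X := by
  have he : d - 1 ≠ 0 := by omega
  have hF : fussCatalanSeries d = X * expandPS (d - 1) (A d) := by
    ext m
    rcases m with _ | m
    · rw [fussCatalanSeries, coeff_mk]
      simp
    · rw [coeff_succ_X_mul, coeff_expandPS, fussCatalanSeries, coeff_mk]
      simp only [Nat.succ_ne_zero, ne_eq, not_false_eq_true, true_and, Nat.succ_sub_one]
      split_ifs with h
      · rw [A, coeff_mk]
      · rfl
  have hE : expandPS (d - 1) (A d) = 1 + X ^ (d - 1) * (expandPS (d - 1) (A d)) ^ d := by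
    conv_lhs => rw [A_eq d hd]
    rw [expandPS_add, expandPS_one _ he, expandPS_mul _ he, expandPS_X _ he,
      expandPS_pow _ he]
  have hx : (X : PowerSeries ℚ) * X ^ (d - 1) = X ^ d := by
    rw [← pow_succ']
    congr 1
    omega
  rw [hF]
  conv_lhs => rw [hE]
  rw [mul_add, mul_one, ← mul_assoc, hx, ← mul_pow, add_comm]
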